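/- Let (W,S) be a Coxeter system with Demazure product ∘. For every involution z in W, the set A_hecke(z) = { w ∈ W : w⁻¹ ∘ w = z } is nonempty. -/

import Mathlib

namespace StmtOne

open CoxeterSystem List

open scoped Classical

variable {B W : Type*} [Group W] {M : CoxeterMatrix B} (cs : CoxeterSystem M W)

/-- The sign function `d v` flips sign exactly at `v`. -/
noncomputable def d (v : W) : W → ℤˣ := fun t => if t = v then -1 else 1

/-- Conjugation automorphism on `W → ℤˣ`. -/
def phiW : W →* MulAut (W → ℤˣ) where
  toFun w :=
    { toFun := fun f t => f (w⁻¹ * t * w)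
      invFun := fun f t => f (w * t * w⁻¹)
      left_inv := fun f => by funext t; group
      right_inv := fun f => by funext t; group
      map_mul' := fun f g => rfl }
  map_one' := by ext f t; simp
  map_mul' u v := by ext f t; simp [mul_assoc]

lemma phiW_d (w v : W) : phiW w (d v) = d (w * v * w⁻¹) := by
  funext t
  show (if w⁻¹ * t * w = v then (-1 : ℤˣ) else 1) = (if t = w * v * w⁻¹ then -1 else 1)
  have : (w⁻¹ * t * w = v) ↔ (t = w * v * w⁻¹) := by
    constructor
    · intro h; rw [← h]; group
    · intro h; rw [h]; group
  simp [this]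

lemma sq_eq_one (F : W → ℤˣ) : F * F = 1 := by
  funext t; exact Int.units_mul_self (F t)

abbrev SG := (W → ℤˣ) ⋊[phiW] W

noncomputable def gens (i : B) : SG (W := W) := ⟨d (cs.simple i), cs.simple i⟩

lemma sdp_pow (f : W → ℤˣ) (a : W) (m : ℕ) :
    (⟨f, a⟩ : SG (W := W)) ^ m = ⟨∏ k ∈ Finset.range m, phiW (a ^ k) f, a ^ m⟩ := by
  induction m with
  | zero => rw [pow_zero, Finset.prod_range_zero, pow_zero]; rfl
  | succ m ihm =>
    rw [pow_succ, ihm, SemidirectProduct.mul_def, Finset.prod_range_succ, pow_succ]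

lemma prod_pair {N : Type*} [CommMonoid N] (g : ℕ → N) (m : ℕ) :
    ∏ k ∈ Finset.range m, (g (2 * k) * g (2 * k + 1)) = ∏ l ∈ Finset.range (2 * m), g l := by
  induction m with
  | zero => simp
  | succ m ihm =>
    rw [Finset.prod_range_succ, ihm, show 2 * (m + 1) = (2 * m + 1) + 1 by ring,
      Finset.prod_range_succ, Finset.prod_range_succ, mul_assoc]

lemma liftable : M.IsLiftable (gens cs) := by
  intro i j
  set r := cs.simple i with hr
  set t := cs.simple j with ht
  set x := r * t with hx
  set m := M i j with hm
  have hrr : r * r = 1 := cs.simple_mul_simple_self i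
  have hri : r⁻¹ = r := cs.inv_simple i
  have hti : t⁻¹ = t := cs.inv_simple j
  have hxm : x ^ m = 1 := cs.simple_mul_simple_pow i j
  -- conjugation of r by powers of x
  have hconj : ∀ k : ℕ, x ^ k * r * (x ^ k)⁻¹ = x ^ (2 * k) * r := by
    intro k
    have h1 : r * x⁻¹ * r⁻¹ = x := by
      rw [hx, mul_inv_rev, hti, hri]
      calc r * (t * r) * r = r * t * (r * r) := by group
        _ = r * t := by rw [hrr, mul_one]
    have h2 : r * (x ^ k)⁻¹ * r⁻¹ = x ^ k := by
      rw [← inv_pow, ← conj_pow, h1]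
    calc x ^ k * r * (x ^ k)⁻¹ = x ^ k * (r * (x ^ k)⁻¹ * r⁻¹) * r := by group
      _ = x ^ k * x ^ k * r := by rw [h2]
      _ = x ^ (2 * k) * r := by rw [two_mul, pow_add]
  have hconj' : ∀ k : ℕ, x ^ k * (x * r) * (x ^ k)⁻¹ = x ^ (2 * k + 1) * r := by
    intro k
    calc x ^ k * (x * r) * (x ^ k)⁻¹ = x * (x ^ k * r * (x ^ k)⁻¹) := by group
        _ = x * (x ^ (2 * k) * r) := by rw [hconj]
        _ = x ^ (2 * k + 1) * r := by rw [← mul_assoc, ← pow_succ']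
  -- the product computation
  have hmul : gens cs i * gens cs j = ⟨d r * d (x * r), x⟩ := by
    rw [gens, gens, SemidirectProduct.mul_def, ← hr, ← ht, phiW_d, hri]
  rw [hmul, sdp_pow]
  have heach : ∀ k, phiW (x ^ k) (d r * d (x * r))
      = d (x ^ (2 * k) * r) * d (x ^ (2 * k + 1) * r) := by
    intro k
    rw [map_mul, phiW_d, phiW_d, hconj k, hconj' k]
  have hleft : ∏ k ∈ Finset.range m, phiW (x ^ k) (d r * d (x * r)) = 1 := by
    calc ∏ k ∈ Finset.range m, phiW (x ^ k) (d r * d (x * r))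
        = ∏ k ∈ Finset.range m, (d (x ^ (2 * k) * r) * d (x ^ (2 * k + 1) * r)) :=
          Finset.prod_congr rfl (fun k _ => heach k)
      _ = ∏ l ∈ Finset.range (2 * m), d (x ^ l * r) := by
          exact prod_pair (fun l => d (x ^ l * r)) m
      _ = (∏ l ∈ Finset.range m, d (x ^ l * r)) * ∏ l ∈ Finset.range m, d (x ^ (m + l) * r) := by
          rw [two_mul, Finset.prod_range_add]
      _ = (∏ l ∈ Finset.range m, d (x ^ l * r)) * ∏ l ∈ Finset.range m, d (x ^ l * r) := by
          congr 1
          exact Finset.prod_congr rfl (fun l _ => by rw [pow_add, hxm, one_mul])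
      _ = 1 := sq_eq_one _
  rw [hleft, hxm]
  rfl

/-- The sign representation. -/
noncomputable def phi : W →* SG (W := W) := cs.lift ⟨gens cs, liftable cs⟩

lemma phi_simple (i : B) : phi cs (cs.simple i) = gens cs i :=
  cs.lift_apply_simple (liftable cs) i

lemma eta_word (ω : List B) :
    (phi cs (cs.wordProd ω)).left = ((cs.leftInvSeq ω).map d).prod := by
  induction ω with
  | nil => simp
  | cons i ω ihω =>
    have hlis : cs.leftInvSeq (i :: ω)
        = cs.simple i :: List.map (MulAut.conj (cs.simple i)) (cs.leftInvSeq ω) := rfl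
    rw [cs.wordProd_cons, map_mul, phi_simple, hlis]
    rw [SemidirectProduct.mul_left]
    show d (cs.simple i) * phiW (cs.simple i) (phi cs (cs.wordProd ω)).left = _
    rw [ihω, List.map_cons, List.prod_cons, List.map_map]
    congr 1
    rw [← MulEquiv.coe_toMonoidHom, map_list_prod, List.map_map]
    congr 1
    apply List.map_congr_left
    intro v _
    show phiW (cs.simple i) (d v) = d (MulAut.conj (cs.simple i) v)
    rw [phiW_d, MulAut.conj_apply]

lemma prod_d_of_not_mem {L : List W} {t : W} (h : t ∉ L) : ((L.map d).prod) t = 1 := by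
  induction L with
  | nil => rfl
  | cons v L ihL =>
    rw [List.map_cons, List.prod_cons]
    have h1 : t ∉ L := fun hc => h (List.mem_cons_of_mem _ hc)
    have h2 : t ≠ v := fun hc => h (hc ▸ (List.mem_cons_self : v ∈ v :: L))
    show d v t * ((L.map d).prod) t = 1
    rw [ihL h1, mul_one]
    simp only [d]
    rw [if_neg h2]

lemma phi_right (w : W) : (phi cs w).right = w := by
  have h : SemidirectProduct.rightHom.comp (phi cs) = MonoidHom.id W := by
    apply cs.ext_simple
    intro i
    show SemidirectProduct.rightHom (phi cs (cs.simple i)) = cs.simple i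
    rw [phi_simple]
    rfl
  have := congrFun (congrArg (fun f => f.toFun) h) w
  simpa using this

/-- The exchange property. -/
lemma exchange {w : W} {i : B} (hw : cs.length (w * cs.simple i) < cs.length w)
    {ω : List B} (hred : cs.IsReduced ω) (hπ : cs.wordProd ω = w) :
    ∃ j < ω.length, w * cs.simple i = cs.wordProd (ω.eraseIdx j) := by
  set t₀ := w * cs.simple i * w⁻¹ with ht₀
  obtain ⟨ω', hlen', hprod'⟩ := cs.exists_reduced_word (w * cs.simple i)
  have hred' : cs.IsReduced ω' := by
    show cs.length (cs.wordProd ω') = ω'.length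
    rw [← hprod']; rw [hprod']; exact hlen'
  have hπ' : cs.wordProd (ω'.concat i) = w := by
    rw [cs.wordProd_concat, ← hprod', cs.simple_mul_simple_cancel_right]
  -- t₀ is not a member of lis ω'
  have hnm : t₀ ∉ cs.leftInvSeq ω' := by
    intro hmem
    have h2 := cs.isLeftInversion_of_mem_leftInvSeq hred' hmem
    rw [← hprod'] at h2
    have h3 : t₀ * (w * cs.simple i) = w := by
      rw [ht₀]; group
      exact cs.simple_mul_simple_cancel_right i
    have h4 := h2.2
    rw [h3] at h4
    omega
  -- the value of the eta function at t₀, computed from ω'.concat i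
  have hval : (phi cs w).left t₀ = -1 := by
    rw [← hπ', eta_word, cs.leftInvSeq_concat, List.concat_eq_append, List.map_append,
      List.prod_append]
    have h5 : cs.wordProd ω' * cs.simple i * (cs.wordProd ω')⁻¹ = t₀ := by
      rw [← hprod', ht₀]
      group
    rw [h5]
    show ((List.map d (cs.leftInvSeq ω')).prod * (d t₀ * 1)) t₀ = -1
    have h6 : ∀ (F G : W → ℤˣ) (t : W), (F * G) t = F t * G t := fun _ _ _ => rfl
    rw [h6, prod_d_of_not_mem hnm, one_mul, mul_one]
    simp [d]
  -- hence t₀ ∈ lis ω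
  have hmem : t₀ ∈ cs.leftInvSeq ω := by
    by_contra hc
    rw [← hπ, eta_word] at hval
    rw [prod_d_of_not_mem hc] at hval
    exact absurd hval (by decide)
  obtain ⟨j, hj, hjt⟩ := List.getElem_of_mem hmem
  have hjlen : j < ω.length := by rwa [cs.length_leftInvSeq] at hj
  refine ⟨j, hjlen, ?_⟩
  have h7 := cs.getD_leftInvSeq_mul_wordProd ω j
  rw [List.getD_eq_getElem _ _ hj, hjt, hπ] at h7
  rw [← h7, ht₀]
  group

/-- Key dichotomy for involutions, from the exchange property. -/
lemma dichotomy {z : W} (hz : z * z = 1) {i : B}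
    (hd : cs.length (z * cs.simple i) < cs.length z) :
    cs.simple i * z = z * cs.simple i ∨ cs.length (cs.simple i * z * cs.simple i) + 2 ≤ cs.length z := by
  have hzinv : z⁻¹ = z := by rw [inv_eq_iff_mul_eq_one]; exact hz
  have hsz : cs.length (cs.simple i * z) = cs.length (z * cs.simple i) := by
    rw [← cs.length_inv (cs.simple i * z), mul_inv_rev, hzinv, cs.inv_simple]
  have hlz : cs.length (z * cs.simple i) + 1 = cs.length z := by
    rcases cs.length_mul_simple z i with h | h
    · omega
    · exact h
  obtain ⟨ω₀, h0len, h0prod⟩ := cs.exists_reduced_word (cs.simple i * z)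
  have hπ : cs.wordProd (i :: ω₀) = z := by
    rw [cs.wordProd_cons, ← h0prod, cs.simple_mul_simple_cancel_left]
  have hred : cs.IsReduced (i :: ω₀) := by
    show cs.length (cs.wordProd (i :: ω₀)) = (i :: ω₀).length
    rw [hπ, List.length_cons, ← (h0len : cs.length (cs.wordProd ω₀) = ω₀.length), ← h0prod, hsz]
    omega
  obtain ⟨j, hjlen, hj⟩ := exchange cs hd hred hπ
  match j with
  | 0 =>
    left
    rw [List.eraseIdx_cons_zero, ← h0prod] at hj
    exact hj.symm
  | (j' + 1) =>
    right
    rw [List.eraseIdx_cons_succ, cs.wordProd_cons] at hj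
    have h8 : cs.simple i * z * cs.simple i = cs.wordProd (ω₀.eraseIdx j') := by
      rw [mul_assoc, hj, ← mul_assoc, cs.simple_mul_simple_self, one_mul]
    have h9 : cs.length (cs.simple i * z * cs.simple i) ≤ (ω₀.eraseIdx j').length := by
      rw [h8]; exact cs.length_wordProd_le _
    have h10 : j' < ω₀.length := by
      simp only [List.length_cons] at hjlen; omega
    rw [List.length_eraseIdx, if_pos h10] at h9
    have h11 : ω₀.length = cs.length z - 1 := by
      have h0l : cs.length (cs.wordProd ω₀) = ω₀.length := h0len
      rw [← h0prod, hsz] at h0l; omega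
    omega
section Demazure

variable (o : W → W → W)
variable (hassoc : ∀ u v w : W, o (o u v) w = o u (o v w))
variable (hsimple : ∀ i : B, o (cs.simple i) (cs.simple i) = cs.simple i)
variable (hadd : ∀ u v : W, cs.length u + cs.length v = cs.length (u * v) → o u v = u * v)

include hassoc hsimple hadd

/-- Right absorption: if `i` is a right descent of `u` then `u ∘ sᵢ = u`. -/
lemma oR {u : W} {i : B} (hd : cs.length (u * cs.simple i) < cs.length u) :
    o u (cs.simple i) = u := by
  have h1 : cs.length (u * cs.simple i) + 1 = cs.length u := by
    rcases cs.length_mul_simple u i with h | h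
    · omega
    · exact h
  have h2 : o (u * cs.simple i) (cs.simple i) = u := by
    rw [hadd (u * cs.simple i) (cs.simple i)
      (by rw [cs.simple_mul_simple_cancel_right, cs.length_simple]; omega),
      cs.simple_mul_simple_cancel_right]
  calc o u (cs.simple i) = o (o (u * cs.simple i) (cs.simple i)) (cs.simple i) := by rw [h2]
    _ = o (u * cs.simple i) (o (cs.simple i) (cs.simple i)) := hassoc _ _ _
    _ = o (u * cs.simple i) (cs.simple i) := by rw [hsimple]
    _ = u := h2

/-- Left absorption: if `i` is a left descent of `u` then `sᵢ ∘ u = u`. -/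
lemma oL {u : W} {i : B} (hd : cs.length (cs.simple i * u) < cs.length u) :
    o (cs.simple i) u = u := by
  have h1 : cs.length (cs.simple i * u) + 1 = cs.length u := by
    rcases cs.length_simple_mul u i with h | h
    · omega
    · exact h
  have h2 : o (cs.simple i) (cs.simple i * u) = u := by
    rw [hadd (cs.simple i) (cs.simple i * u)
      (by rw [cs.simple_mul_simple_cancel_left, cs.length_simple]; omega),
      cs.simple_mul_simple_cancel_left]
  calc o (cs.simple i) u = o (cs.simple i) (o (cs.simple i) (cs.simple i * u)) := by rw [h2]
    _ = o (o (cs.simple i) (cs.simple i)) (cs.simple i * u) := (hassoc _ _ _).symm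
    _ = o (cs.simple i) (cs.simple i * u) := by rw [hsimple]
    _ = u := h2

/-- `i` is always a right descent of `o u sᵢ`. -/
lemma o_desc (u : W) (i : B) :
    cs.length (o u (cs.simple i) * cs.simple i) < cs.length (o u (cs.simple i)) := by
  rcases cs.length_mul_simple u i with h | h
  · have h2 : o u (cs.simple i) = u * cs.simple i :=
      hadd u (cs.simple i) (by rw [cs.length_simple]; omega)
    rw [h2, cs.simple_mul_simple_cancel_right]
    omega
  · have hd : cs.length (u * cs.simple i) < cs.length u := by omega
    rw [oR cs o hassoc hsimple hadd hd]
    exact hd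

/-- Right descents are inherited by left Demazure products. -/
lemma o_desc_left (a : W) {v : W} {i : B}
    (hd : cs.length (v * cs.simple i) < cs.length v) :
    cs.length ((o a v) * cs.simple i) < cs.length (o a v) := by
  have h1 : cs.length (v * cs.simple i) + 1 = cs.length v := by
    rcases cs.length_mul_simple v i with h | h
    · omega
    · exact h
  have h2 : o (v * cs.simple i) (cs.simple i) = v := by
    rw [hadd (v * cs.simple i) (cs.simple i)
      (by rw [cs.simple_mul_simple_cancel_right, cs.length_simple]; omega),
      cs.simple_mul_simple_cancel_right]
  have h3 : o a v = o (o a (v * cs.simple i)) (cs.simple i) := by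
    rw [hassoc, h2]
  rw [h3]
  exact o_desc cs o hassoc hsimple hadd _ i

/-- Key computation: if `w = w' * sᵢ` with `ℓ(w) = ℓ(w') + 1`, then
`w⁻¹ ∘ w = sᵢ ∘ ((w'⁻¹ ∘ w') ∘ sᵢ)`. -/
lemma o_split {w' : W} {i : B} (hlen : cs.length (w' * cs.simple i) = cs.length w' + 1) :
    o (w' * cs.simple i)⁻¹ (w' * cs.simple i)
      = o (cs.simple i) (o (o w'⁻¹ w') (cs.simple i)) := by
  have hinv : (w' * cs.simple i)⁻¹ = cs.simple i * w'⁻¹ := by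
    rw [mul_inv_rev, cs.inv_simple]
  have h1 : o (cs.simple i) w'⁻¹ = cs.simple i * w'⁻¹ := by
    apply hadd
    rw [cs.length_simple, cs.length_inv, ← hinv, cs.length_inv, hlen]
    omega
  have h2 : o w' (cs.simple i) = w' * cs.simple i := by
    apply hadd
    rw [cs.length_simple, hlen]
  calc o (w' * cs.simple i)⁻¹ (w' * cs.simple i)
      = o (o (cs.simple i) w'⁻¹) (o w' (cs.simple i)) := by rw [h1, h2, hinv]
    _ = o (cs.simple i) (o w'⁻¹ (o w' (cs.simple i))) := hassoc _ _ _
    _ = o (cs.simple i) (o (o w'⁻¹ w') (cs.simple i)) := by rw [hassoc]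

/-- Descent transfer: a right descent of `w` is a right descent of `w⁻¹ ∘ w`. -/
lemma o_descent_transfer {w z : W} {i : B} (hwz : o w⁻¹ w = z)
    (hd : cs.length (w * cs.simple i) < cs.length w) :
    cs.length (z * cs.simple i) < cs.length z := by
  have h1 : cs.length (w * cs.simple i) + 1 = cs.length w := by
    rcases cs.length_mul_simple w i with h | h
    · omega
    · exact h
  set u := w * cs.simple i with hu
  have hw : w = u * cs.simple i := by rw [hu, cs.simple_mul_simple_cancel_right]
  have hlen : cs.length (u * cs.simple i) = cs.length u + 1 := by
    rw [← hw]; omega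
  have h2 : z = o (cs.simple i) (o (o u⁻¹ u) (cs.simple i)) := by
    rw [← hwz, hw]
    exact o_split cs o hassoc hsimple hadd hlen
  rw [h2]
  exact o_desc_left cs o hassoc hsimple hadd (cs.simple i)
    (o_desc cs o hassoc hsimple hadd (o u⁻¹ u) i)

/-- Main induction: every involution is of the form `w⁻¹ ∘ w`. -/
lemma main_induction : ∀ n : ℕ, ∀ z : W, cs.length z = n → z * z = 1 →
    ∃ w : W, o w⁻¹ w = z := by
  intro n
  induction n using Nat.strong_induction_on with
  | _ n ih =>
    intro z hzn hz
    by_cases h1 : z = 1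
    · refine ⟨1, ?_⟩
      rw [inv_one, hadd 1 1 (by simp), mul_one, h1]
    · obtain ⟨i, hi⟩ := cs.exists_rightDescent_of_ne_one h1
      have hd : cs.length (z * cs.simple i) < cs.length z := hi
      have hlz : cs.length (z * cs.simple i) + 1 = cs.length z := by
        rcases cs.length_mul_simple z i with h | h
        · omega
        · exact h
      have hzinv : z⁻¹ = z := by rw [inv_eq_iff_mul_eq_one]; exact hz
      have hsz : cs.length (cs.simple i * z) = cs.length (z * cs.simple i) := by
        rw [← cs.length_inv (cs.simple i * z), mul_inv_rev, hzinv, cs.inv_simple]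
      rcases dichotomy cs hz hd with hcomm | hlen2
      · -- commuting case
        obtain ⟨y, hy⟩ : ∃ y, y = z * cs.simple i := ⟨_, rfl⟩
        have hyy : y * y = 1 := by
          rw [hy]
          have e1 : z * cs.simple i * (z * cs.simple i)
              = z * (cs.simple i * z) * cs.simple i := by group
          rw [e1, hcomm, ← mul_assoc, hz, one_mul, cs.simple_mul_simple_self]
        have hylen : cs.length y + 1 = cs.length z := by rw [hy]; exact hlz
        obtain ⟨w', hw'⟩ := ih (cs.length y) (by omega) y rfl hyy
        have hysi : y * cs.simple i = z := by
          rw [hy, cs.simple_mul_simple_cancel_right]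
        have hyd : ¬ cs.length (w' * cs.simple i) < cs.length w' := by
          intro hc
          have h5 := o_descent_transfer cs o hassoc hsimple hadd hw' hc
          rw [hysi] at h5
          omega
        have hw'len : cs.length (w' * cs.simple i) = cs.length w' + 1 := by
          rcases cs.length_mul_simple w' i with h | h
          · exact h
          · omega
        refine ⟨w' * cs.simple i, ?_⟩
        rw [o_split cs o hassoc hsimple hadd hw'len, hw']
        have h3 : o y (cs.simple i) = z := by
          rw [hadd y (cs.simple i) (by rw [cs.length_simple, hysi]; omega), hysi]
        rw [h3]
        apply oL cs o hassoc hsimple hadd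
        rw [hsz]
        omega
      · -- non-commuting case
        obtain ⟨y, hy⟩ : ∃ y, y = cs.simple i * z * cs.simple i := ⟨_, rfl⟩
        rw [← hy] at hlen2
        have hyy : y * y = 1 := by
          rw [hy]
          have e1 : cs.simple i * z * cs.simple i * (cs.simple i * z * cs.simple i)
              = cs.simple i * (z * (cs.simple i * cs.simple i) * z) * cs.simple i := by group
          rw [e1, cs.simple_mul_simple_self, mul_one, hz, mul_one,
            cs.simple_mul_simple_self]
        have hysi : y * cs.simple i = cs.simple i * z := by
          rw [hy, cs.simple_mul_simple_cancel_right]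
        obtain ⟨w', hw'⟩ := ih (cs.length y) (by omega) y rfl hyy
        have hymul : cs.length (y * cs.simple i) = cs.length y + 1 := by
          rcases cs.length_mul_simple y i with h | h
          · exact h
          · exfalso; rw [hysi, hsz] at h; omega
        have hyd : ¬ cs.length (w' * cs.simple i) < cs.length w' := by
          intro hc
          have h5 := o_descent_transfer cs o hassoc hsimple hadd hw' hc
          rw [hysi, hsz] at h5
          omega
        have hw'len : cs.length (w' * cs.simple i) = cs.length w' + 1 := by
          rcases cs.length_mul_simple w' i with h | h
          · exact h
          · omega
        refine ⟨w' * cs.simple i, ?_⟩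
        rw [o_split cs o hassoc hsimple hadd hw'len, hw']
        have h3 : o y (cs.simple i) = cs.simple i * z := by
          rw [hadd y (cs.simple i) (by rw [cs.length_simple, hymul]), hysi]
        rw [h3]
        rw [hadd (cs.simple i) (cs.simple i * z)
          (by rw [cs.length_simple, cs.simple_mul_simple_cancel_left, hsz]; omega),
          cs.simple_mul_simple_cancel_left]

end Demazure

end StmtOne

/-- Let `(W, S)` be a Coxeter system and let `o` be its Demazure product,
i.e. the (unique) associative product with `s ∘ s = s` for all simple reflections `s`
and `u ∘ v = u * v` whenever `ℓ(u) + ℓ(v) = ℓ(u * v)`.  Then for every involution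
`z ∈ W`, the set `A_hecke(z) = { w : w⁻¹ ∘ w = z }` is nonempty. -/
theorem stmt_1 {B W : Type*} [Group W] {M : CoxeterMatrix B} (cs : CoxeterSystem M W)
    (o : W → W → W)
    (hassoc : ∀ u v w : W, o (o u v) w = o u (o v w))
    (hsimple : ∀ i : B, o (cs.simple i) (cs.simple i) = cs.simple i)
    (hadd : ∀ u v : W, cs.length u + cs.length v = cs.length (u * v) → o u v = u * v)
    (z : W) (hz : z * z = 1) :
    {w : W | o w⁻¹ w = z}.Nonempty := by
  obtain ⟨w, hw⟩ := StmtOne.main_induction cs o hassoc hsimple hadd (cs.length z) z rfl hz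
  exact ⟨w, hw⟩
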